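/- Let Ω ∈ (0,1), T > 0, M₀ > 0, δ > 0 with T = -ln(Ω/(1+M₀))/δ, and let c > 0. Suppose N : [t_0, ∞) → ℝ≥0 and μ_i = Ω^{i-1} μ(t_0) with μ(t_0) > 0 satisfy: for each i ≥ 1 and t ∈ [t_0+(i-1)T, t_0+iT), N(t) ≤ max{M₀ e^{-δ(t - (t_0+(i-1)T))} N(t_0+(i-1)T), Ω c μ_i} and N(t_0+(i-1)T) ≤ c μ_i. Then for all t ≥ t_0, N(t) ≤ (1+M₀) c μ(t_0) e^{(ln Ω / T)(t - t_0)} / Ω. -/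

import Mathlib

open Real Set

set_option maxHeartbeats 1000000 in
/-- Recursive zooming-in argument: per-interval decay plus end-of-interval
contraction yields global exponential convergence at rate `ln Ω / T`. -/
theorem stmt_13 (Ω T M₀ δ c t₀ μt₀ : ℝ)
    (hΩ : Ω ∈ Set.Ioo (0 : ℝ) 1) (hT : 0 < T) (hM₀ : 0 < M₀) (hδ : 0 < δ)
    (hTdef : T = -Real.log (Ω / (1 + M₀)) / δ) (hc : 0 < c) (hμ : 0 < μt₀)
    (N : ℝ → ℝ) (hNn : ∀ t, 0 ≤ N t)
    (hdecay : ∀ i : ℕ, 1 ≤ i → ∀ t, t₀ + ((i : ℝ) - 1) * T ≤ t → t < t₀ + (i : ℝ) * T →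
      N t ≤ max (M₀ * Real.exp (-δ * (t - (t₀ + ((i : ℝ) - 1) * T))) *
          N (t₀ + ((i : ℝ) - 1) * T)) (Ω * c * (Ω ^ (i - 1) * μt₀)))
    (hstart : ∀ i : ℕ, 1 ≤ i → N (t₀ + ((i : ℝ) - 1) * T) ≤ c * (Ω ^ (i - 1) * μt₀)) :
    ∀ t, t₀ ≤ t →
      N t ≤ (1 + M₀) * c * μt₀ * Real.exp ((Real.log Ω / T) * (t - t₀)) / Ω := by
  obtain ⟨hΩ0, hΩ1⟩ := hΩ
  intro t ht
  set L : ℝ := Real.log Ω with hLdef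
  have hL : L < 0 := Real.log_neg hΩ0 hΩ1
  -- δ * T = log(1+M₀) - log Ω
  have h1M : (0:ℝ) < 1 + M₀ := by linarith
  have hlog1M : 0 < Real.log (1 + M₀) := Real.log_pos (by linarith)
  have hδT : δ * T = Real.log (1 + M₀) - L := by
    have : Real.log (Ω / (1 + M₀)) = L - Real.log (1 + M₀) :=
      Real.log_div hΩ0.ne' h1M.ne'
    rw [hTdef, this]
    field_simp
    ring
  have hrate : -δ ≤ L / T := by
    rw [le_div_iff₀ hT]
    nlinarith
  -- set up the interval index
  set x : ℝ := (t - t₀) / T with hxdef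
  have hx0 : 0 ≤ x := div_nonneg (by linarith) hT.le
  have hxt : x * T = t - t₀ := div_mul_cancel₀ _ hT.ne'
  set k : ℕ := ⌊x⌋₊ with hkdef
  have hk1 : (k : ℝ) ≤ x := Nat.floor_le hx0
  have hk2 : x < (k : ℝ) + 1 := Nat.lt_floor_add_one x
  have htk1 : t₀ + (k : ℝ) * T ≤ t := by nlinarith
  have htk2 : t < t₀ + ((k : ℝ) + 1) * T := by nlinarith
  have hcast : ((k + 1 : ℕ) : ℝ) - 1 = (k : ℝ) := by push_cast; ring
  have hd := hdecay (k + 1) (by omega) t (by rw [hcast]; exact htk1)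
    (by push_cast; linarith)
  rw [hcast, Nat.add_sub_cancel] at hd
  have hs := hstart (k + 1) (by omega)
  rw [hcast, Nat.add_sub_cancel] at hs
  -- express Ω^k via exp
  have hΩk : Ω ^ k = Real.exp ((k : ℝ) * L) := by
    rw [Real.exp_nat_mul, Real.exp_log hΩ0]
  -- the goal RHS with s notation
  set s : ℝ := t - (t₀ + (k : ℝ) * T) with hsdef
  have hs0 : 0 ≤ s := by linarith
  clear_value L x k s
  have hsplit : (L / T) * (t - t₀) = (k : ℝ) * L + (L / T) * s := by
    have : t - t₀ = (k : ℝ) * T + s := by rw [hsdef]; ring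
    rw [this]
    field_simp
  have hΩle : 1 ≤ (1 + M₀) / Ω := (le_div_iff₀ hΩ0).2 (by linarith)
  refine le_trans hd (max_le ?_ ?_)
  · -- first branch
    have hA : M₀ * Real.exp (-δ * s) * N (t₀ + (k : ℝ) * T) ≤
        M₀ * Real.exp (-δ * s) * (c * (Ω ^ k * μt₀)) := by
      apply mul_le_mul_of_nonneg_left hs
      positivity
    refine le_trans hA ?_
    rw [hΩk]
    have hexp : Real.exp (-δ * s + (k : ℝ) * L) ≤
        Real.exp ((L / T) * (t - t₀)) := by
      apply Real.exp_le_exp.2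
      rw [hsplit]
      nlinarith
    calc M₀ * Real.exp (-δ * s) * (c * (Real.exp ((k : ℝ) * L) * μt₀))
        = M₀ * c * μt₀ * Real.exp (-δ * s + (k : ℝ) * L) := by
          rw [Real.exp_add]; ring
      _ ≤ M₀ * c * μt₀ * Real.exp ((L / T) * (t - t₀)) := by
          apply mul_le_mul_of_nonneg_left hexp; positivity
      _ = M₀ * (c * μt₀ * Real.exp ((L / T) * (t - t₀))) := by ring
      _ ≤ ((1 + M₀) / Ω) * (c * μt₀ * Real.exp ((L / T) * (t - t₀))) := by
          apply mul_le_mul_of_nonneg_right _ (by positivity)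
          rw [le_div_iff₀ hΩ0]
          nlinarith
      _ = (1 + M₀) * c * μt₀ * Real.exp ((L / T) * (t - t₀)) / Ω := by ring
  · -- second branch
    have hB : Ω * c * (Ω ^ k * μt₀) = c * μt₀ * Real.exp (((k : ℝ) + 1) * L) := by
      rw [hΩk]
      have : Real.exp (((k : ℝ) + 1) * L) = Real.exp ((k : ℝ) * L) * Real.exp L := by
        rw [← Real.exp_add]; ring_nf
      rw [this, hLdef, Real.exp_log hΩ0]
      ring
    rw [hB]
    have hexp : Real.exp (((k : ℝ) + 1) * L) ≤ Real.exp ((L / T) * (t - t₀)) := by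
      apply Real.exp_le_exp.2
      have : (L / T) * (t - t₀) = x * L := by
        rw [← hxt]; field_simp
      rw [this]
      nlinarith
    calc c * μt₀ * Real.exp (((k : ℝ) + 1) * L)
        ≤ c * μt₀ * Real.exp ((L / T) * (t - t₀)) := by
          apply mul_le_mul_of_nonneg_left hexp; positivity
      _ = 1 * (c * μt₀ * Real.exp ((L / T) * (t - t₀))) := by ring
      _ ≤ ((1 + M₀) / Ω) * (c * μt₀ * Real.exp ((L / T) * (t - t₀))) :=
          mul_le_mul_of_nonneg_right hΩle (by positivity)
      _ = (1 + M₀) * c * μt₀ * Real.exp ((L / T) * (t - t₀)) / Ω := by ring
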